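/- Let S be a multiplicative semigroup of bounded operators on a complex Hilbert space H such that every element of S is a compact operator, and suppose S contains an operator T that is not selfadjoint (T ≠ T*) and has infinite rank (the range of T is not finite-dimensional). Then S is not a selfadjoint-ideal (SI) semigroup. -/

import Mathlib

open ContinuousLinearMap

noncomputable section SIAux

namespace SIAux

open scoped InnerProductSpace ComplexOrder
open Finset Matrix

set_option linter.unusedSectionVars false
set_option linter.unusedVariables false
set_option synthInstance.maxHeartbeats 1000000
set_option maxHeartbeats 1600000

variable {H : Type*} [NormedAddCommGroup H] [InnerProductSpace ℂ H] [CompleteSpace H]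

/-- The Gram matrix of a tuple of vectors. -/
def gram {N : ℕ} (v : Fin N → H) : Matrix (Fin N) (Fin N) ℂ :=
  Matrix.of fun i j => (inner ℂ (v i) (v j) : ℂ)

@[simp] lemma gram_apply {N : ℕ} (v : Fin N → H) (i j : Fin N) :
    gram v i j = (inner ℂ (v i) (v j) : ℂ) := rfl

/-- The (absolute value of the) Gram determinant. -/
def G {N : ℕ} (v : Fin N → H) : ℝ := ‖(gram v).det‖

lemma G_nonneg {N : ℕ} (v : Fin N → H) : 0 ≤ G v := norm_nonneg _

lemma gram_isHermitian {N : ℕ} (v : Fin N → H) : (gram v).IsHermitian := by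
  ext i j
  simp [Matrix.conjTranspose_apply, inner_conj_symm]

lemma gram_mulVec {N : ℕ} (v : Fin N → H) (c : Fin N → ℂ) (i : Fin N) :
    (Matrix.mulVec (gram v) c) i = (inner ℂ (v i) (∑ j, c j • v j) : ℂ) := by
  simp [Matrix.mulVec, dotProduct, inner_sum, inner_smul_right, mul_comm]

lemma gram_quadratic {N : ℕ} (v : Fin N → H) (c : Fin N → ℂ) :
    dotProduct (star c) (Matrix.mulVec (gram v) c)
      = (inner ℂ (∑ i, c i • v i) (∑ j, c j • v j) : ℂ) := by
  rw [sum_inner]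
  simp only [dotProduct, gram_mulVec, Pi.star_apply, inner_smul_left, RCLike.star_def]

lemma gram_posSemidef {N : ℕ} (v : Fin N → H) : (gram v).PosSemidef := by
  refine Matrix.PosSemidef.of_dotProduct_mulVec_nonneg (gram_isHermitian v) fun c => ?_
  rw [gram_quadratic, Complex.nonneg_iff]
  constructor
  · simpa using inner_self_nonneg (𝕜 := ℂ) (x := ∑ i, c i • v i)
  · have := inner_self_im (𝕜 := ℂ) (x := ∑ i, c i • v i)
    simp only [RCLike.im_to_complex] at this
    exact this.symm

lemma G_orthonormal {N : ℕ} {e : Fin N → H} (he : Orthonormal ℂ e) : G e = 1 := by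
  have : gram e = 1 := by
    ext i j
    rcases eq_or_ne i j with rfl | h
    · simp [orthonormal_iff_ite.mp he i i, he.1 i]
    · simp [orthonormal_iff_ite.mp he i j, h, Matrix.one_apply_ne h]
  simp [G, this]

lemma gram_det_eq_zero {N : ℕ} {v : Fin N → H} (hv : ¬ LinearIndependent ℂ v) :
    (gram v).det = 0 := by
  obtain ⟨c, hc, i, hi⟩ := Fintype.not_linearIndependent_iff.mp hv
  refine Matrix.exists_mulVec_eq_zero_iff.mp ⟨c, ?_, ?_⟩
  · intro h; exact hi (congrFun h i)
  · funext j
    rw [gram_mulVec, hc]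
    simp

lemma G_pos_of_linearIndependent {N : ℕ} {v : Fin N → H}
    (hv : LinearIndependent ℂ v) : 0 < G v := by
  have hne : (gram v).det ≠ 0 := by
    intro h
    obtain ⟨c, hc, hc0⟩ := Matrix.exists_mulVec_eq_zero_iff.mpr h
    have hw : (∑ j, c j • v j) = 0 := by
      have h1 : (inner ℂ (∑ i, c i • v i) (∑ j, c j • v j) : ℂ) = 0 := by
        rw [sum_inner]
        have : ∀ i, (inner ℂ (v i) (∑ j, c j • v j) : ℂ) = 0 := by
          intro i
          have := congrFun hc0 i
          rwa [gram_mulVec] at this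
        simp [inner_smul_left, this]
      exact inner_self_eq_zero.mp h1
    have := Fintype.linearIndependent_iff.mp hv c hw
    exact hc (funext fun i => this i)
  exact norm_pos_iff.mpr hne

lemma gram_comb {N : ℕ} (M : Matrix (Fin N) (Fin N) ℂ) (w : Fin N → H) :
    gram (fun i => ∑ j, M i j • w j) = M.map (starRingEnd ℂ) * gram w * M.transpose := by
  ext i k
  simp only [Matrix.mul_apply, gram_apply, Matrix.map_apply, Matrix.transpose_apply]
  rw [sum_inner]
  simp only [inner_smul_left, inner_sum, inner_smul_right, Finset.mul_sum, Finset.sum_mul]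
  rw [Finset.sum_comm]
  refine Finset.sum_congr rfl fun a _ => Finset.sum_congr rfl fun b _ => by ring

lemma G_comb {N : ℕ} (M : Matrix (Fin N) (Fin N) ℂ) (w : Fin N → H) :
    G (fun i => ∑ j, M i j • w j) = (‖M.det‖)^2 * G w := by
  rw [G, gram_comb]
  simp only [Matrix.det_mul, Matrix.det_transpose]
  have h1 : (M.map ⇑(starRingEnd ℂ)).det = (starRingEnd ℂ) M.det := by
    rw [RingHom.map_det (starRingEnd ℂ) M]; rfl
  rw [h1, norm_mul, norm_mul, Complex.norm_conj, G]
  ring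


lemma G_eq_prod_eigenvalues {N : ℕ} (v : Fin N → H) :
    G v = ∏ i, (gram_posSemidef v).1.eigenvalues i := by
  rw [G, (gram_posSemidef v).1.det_eq_prod_eigenvalues]
  rw [norm_prod]
  refine Finset.prod_congr rfl fun i _ => ?_
  rw [RCLike.norm_ofReal,
    abs_of_nonneg ((gram_posSemidef v).eigenvalues_nonneg i)]

lemma sum_eigenvalues_gram {N : ℕ} (v : Fin N → H) :
    ∑ i, (gram_posSemidef v).1.eigenvalues i = ∑ i, ‖v i‖^2 := by
  set hherm := (gram_posSemidef v).1 with hh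
  have htr1 : (gram v).trace = ((∑ i, hherm.eigenvalues i : ℝ) : ℂ) := by
    conv_lhs => rw [hherm.spectral_theorem, Unitary.conjStarAlgAut_apply]
    rw [Matrix.trace_mul_cycle]
    rw [Unitary.coe_star_mul_self]
    rw [one_mul, Matrix.trace_diagonal]
    push_cast; rfl
  have htr2 : (gram v).trace = ((∑ i, ‖v i‖^2 : ℝ) : ℂ) := by
    rw [Matrix.trace]
    have : ∀ i, (gram v).diag i = ((‖v i‖^2 : ℝ) : ℂ) := by
      intro i
      have := inner_self_eq_norm_sq_to_K (𝕜 := ℂ) (x := v i)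
      simp only [Matrix.diag, gram_apply]
      rw [this]; push_cast; rfl
    rw [Finset.sum_congr rfl (fun i _ => this i)]
    push_cast; rfl
  exact Complex.ofReal_injective (htr1.symm.trans htr2)

lemma G_le_one_of_unit {N : ℕ} (u : Fin N → H) (h : ∀ i, ‖u i‖ = 1) : G u ≤ 1 := by
  rcases Nat.eq_zero_or_pos N with hN | hN
  · subst hN
    simp [G, Matrix.det_isEmpty]
  · set lam := (gram_posSemidef u).1.eigenvalues with hl
    have hnn : ∀ i ∈ Finset.univ, (0:ℝ) ≤ lam i :=
      fun i _ => (gram_posSemidef u).eigenvalues_nonneg i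
    have hsum : ∑ i, lam i = N := by
      rw [sum_eigenvalues_gram]
      simp [h]
    have hG : G u = ∏ i, lam i := G_eq_prod_eigenvalues u
    have hNne : (N:ℝ) ≠ 0 := by positivity
    have amgm := Real.geom_mean_le_arith_mean_weighted Finset.univ
      (fun _ => (N:ℝ)⁻¹) lam (fun i _ => by positivity)
      (by simp [Finset.sum_const, hNne]) hnn
    rw [Real.finset_prod_rpow Finset.univ lam hnn] at amgm
    have hr : ∑ i, (N:ℝ)⁻¹ * lam i = 1 := by
      rw [← Finset.mul_sum, hsum]
      field_simp
    rw [hr] at amgm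
    have hP : 0 ≤ ∏ i, lam i := Finset.prod_nonneg hnn
    by_contra hgt
    push_neg at hgt
    rw [hG] at hgt
    have h2 : 1 < (∏ i, lam i) ^ ((N:ℝ)⁻¹) := by
      rw [Real.one_lt_rpow_iff_of_pos (lt_trans one_pos hgt)]
      left
      exact ⟨hgt, by positivity⟩
    linarith

lemma G_le_prod {N : ℕ} (v : Fin N → H) : G v ≤ ∏ i, ‖v i‖^2 := by
  by_cases hz : ∃ i, v i = 0
  · obtain ⟨i, hi⟩ := hz
    have hdet : (gram v).det = 0 :=
      Matrix.det_eq_zero_of_row_eq_zero i (fun j => by simp [gram, hi])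
    rw [G, hdet]
    simp only [norm_zero]
    exact Finset.prod_nonneg fun i _ => by positivity
  · push_neg at hz
    set u : Fin N → H := fun i => ((‖v i‖ : ℂ))⁻¹ • v i with hu
    have hnz : ∀ i, (0:ℝ) < ‖v i‖ := fun i => norm_pos_iff.mpr (hz i)
    have hnorm : ∀ i, ‖u i‖ = 1 := by
      intro i
      rw [hu]
      simp only [norm_smul]
      rw [norm_inv, Complex.norm_real, Real.norm_eq_abs, abs_of_pos (hnz i)]
      exact inv_mul_cancel₀ (hnz i).ne'
    set M : Matrix (Fin N) (Fin N) ℂ := Matrix.diagonal (fun i => ((‖v i‖ : ℝ) : ℂ)) with hM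
    have hveq : v = fun i => ∑ j, M i j • u j := by
      funext i
      rw [Finset.sum_eq_single i]
      · rw [hM, hu]
        simp only [Matrix.diagonal_apply_eq]
        rw [smul_smul]
        rw [mul_inv_cancel₀ (by exact_mod_cast (hnz i).ne')]
        simp
      · intro j _ hj
        rw [hM]
        simp [Matrix.diagonal_apply_ne' _ hj]
      · simp
    have hGv : G v = (‖M.det‖)^2 * G u := by
      conv_lhs => rw [hveq]
      exact G_comb M u
    have hdet : ‖M.det‖ = ∏ i, ‖v i‖ := by
      rw [hM, Matrix.det_diagonal]
      rw [show (∏ i, ((‖v i‖ : ℝ) : ℂ)) = ((∏ i, ‖v i‖ : ℝ) : ℂ) by push_cast; rfl]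
      rw [Complex.norm_real, Real.norm_eq_abs, abs_of_nonneg (Finset.prod_nonneg fun i _ => (hnz i).le)]
    have h1 : G u ≤ 1 := G_le_one_of_unit u hnorm
    rw [hGv, hdet]
    calc (∏ i, ‖v i‖)^2 * G u ≤ (∏ i, ‖v i‖)^2 * 1 := by
          apply mul_le_mul_of_nonneg_left h1 (by positivity)
      _ = ∏ i, ‖v i‖^2 := by rw [mul_one, ← Finset.prod_pow]

/-- Uniform Gram determinant bound over orthonormal tuples. -/
def GramBound (A : H →L[ℂ] H) (N : ℕ) (s : ℝ) : Prop :=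
  ∀ e : Fin N → H, Orthonormal ℂ e → G (fun i => A (e i)) ≤ s

lemma master {N : ℕ} {A : H →L[ℂ] H} {s : ℝ} (hs : 0 ≤ s) (hb : GramBound A N s)
    (v : Fin N → H) : G (fun i => A (v i)) ≤ s * G v := by
  by_cases hv : LinearIndependent ℂ v
  · set W := Submodule.span ℂ (Set.range v) with hW
    have : FiniteDimensional ℂ W := FiniteDimensional.span_of_finite ℂ (Set.finite_range v)
    have hdim : Module.finrank ℂ W = N := by
      rw [hW, finrank_span_eq_card hv, Fintype.card_fin]
    let b : OrthonormalBasis (Fin N) ℂ W :=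
      (stdOrthonormalBasis ℂ W).reindex (finCongr hdim)
    let e : Fin N → H := fun j => (b j : H)
    have he : Orthonormal ℂ e := b.orthonormal.comp_linearIsometry W.subtypeₗᵢ
    have hmem : ∀ i, v i ∈ W := fun i => Submodule.subset_span ⟨i, rfl⟩
    set M : Matrix (Fin N) (Fin N) ℂ := Matrix.of fun i j => b.repr ⟨v i, hmem i⟩ j with hM
    have hvi : ∀ i, v i = ∑ j, M i j • e j := by
      intro i
      have h1 := b.sum_repr ⟨v i, hmem i⟩
      have h2 := congrArg (Submodule.subtype W) h1
      simp only [map_sum, _root_.map_smul] at h2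
      exact h2.symm
    have hGv : G v = (‖M.det‖)^2 * G e := by
      conv_lhs => rw [show v = fun i => ∑ j, M i j • e j from funext hvi]
      exact G_comb M e
    have hAvi : (fun i => A (v i)) = fun i => ∑ j, M i j • A (e j) := by
      funext i
      conv_lhs => rw [hvi i]
      rw [map_sum]
      simp only [_root_.map_smul]
    have hGAv : G (fun i => A (v i)) = (‖M.det‖)^2 * G (fun j => A (e j)) := by
      rw [hAvi]
      exact G_comb M (fun j => A (e j))
    rw [hGAv, hGv, G_orthonormal he, mul_one]
    calc (‖M.det‖)^2 * G (fun j => A (e j))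
        ≤ (‖M.det‖)^2 * s := by
          apply mul_le_mul_of_nonneg_left (hb e he) (by positivity)
      _ = s * (‖M.det‖)^2 := by ring
  · have hdep : ¬ LinearIndependent ℂ (fun i => A (v i)) := by
      intro hind
      apply hv
      rw [Fintype.linearIndependent_iff]
      intro c hc
      apply Fintype.linearIndependent_iff.mp hind c
      rw [← map_zero A, ← hc, map_sum]
      simp only [_root_.map_smul]
    have h0 : G (fun i => A (v i)) = 0 := by
      rw [G, gram_det_eq_zero hdep, norm_zero]
    rw [h0]
    exact mul_nonneg hs (G_nonneg v)

/-- Gram bounds with geometric decay at every size. -/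
def GoodSmall (A : H →L[ℂ] H) : Prop :=
  ∀ ε : ℝ, 0 < ε → ε ≤ 1 → ∃ K : ℝ, 1 ≤ K ∧ ∀ N : ℕ, GramBound A N (K * ε ^ N)

lemma gramBound_trivial (A : H →L[ℂ] H) (N : ℕ) :
    GramBound A N ((max 1 (‖A‖^2))^N) := by
  intro e he
  calc G (fun i => A (e i)) ≤ ∏ i, ‖A (e i)‖^2 := G_le_prod _
    _ ≤ ∏ _i : Fin N, max 1 (‖A‖^2) := by
        apply Finset.prod_le_prod (fun i _ => by positivity)
        intro i _
        refine le_max_of_le_right ?_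
        have h1 : ‖A (e i)‖ ≤ ‖A‖ := by
          have := A.le_opNorm (e i)
          rwa [he.1 i, mul_one] at this
        exact pow_le_pow_left₀ (norm_nonneg _) h1 2
    _ = (max 1 (‖A‖^2))^N := by rw [Finset.prod_const, Finset.card_univ, Fintype.card_fin]

lemma gramBound_mul {A B : H →L[ℂ] H} {N : ℕ} {s t : ℝ} (hs : 0 ≤ s) (ht : 0 ≤ t)
    (hA : GramBound A N s) (hB : GramBound B N t) : GramBound (A * B) N (s * t) := by
  intro e he
  have h1 : G (fun i => (A * B) (e i)) = G (fun i => A (B (e i))) := rfl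
  rw [h1]
  calc G (fun i => A (B (e i))) ≤ s * G (fun i => B (e i)) := master hs hA _
    _ ≤ s * t := mul_le_mul_of_nonneg_left (hB e he) hs

lemma gramBound_pow {A : H →L[ℂ] H} {N : ℕ} {s : ℝ} (hs : 0 ≤ s)
    (hA : GramBound A N s) (n : ℕ) : GramBound (A ^ n) N (s ^ n) := by
  induction n with
  | zero =>
      intro e he
      simp only [pow_zero]
      have : G (fun i => (1 : H →L[ℂ] H) (e i)) = G e := rfl
      rw [this, G_orthonormal he]
  | succ n ih =>
      rw [pow_succ, pow_succ]
      exact gramBound_mul (pow_nonneg hs n) hs ih hA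

lemma goodSmall_mul {A B : H →L[ℂ] H} (hA : GoodSmall A) (hB : GoodSmall B) :
    GoodSmall (A * B) := by
  intro ε hε hε1
  obtain ⟨K₁, hK₁, h₁⟩ := hA ε hε hε1
  obtain ⟨K₂, hK₂, h₂⟩ := hB ε hε hε1
  refine ⟨K₁ * K₂, by nlinarith, fun N => ?_⟩
  have hbound := gramBound_mul (by positivity) (by positivity) (h₁ N) (h₂ N)
  intro e he
  calc G (fun i => (A * B) (e i)) ≤ (K₁ * ε ^ N) * (K₂ * ε ^ N) := hbound e he
    _ = (K₁ * K₂ * ε ^ N) * ε ^ N := by ring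
    _ ≤ (K₁ * K₂ * ε ^ N) * 1 := by
        have hεN : ε ^ N ≤ 1 := pow_le_one₀ hε.le hε1
        apply mul_le_mul_of_nonneg_left hεN (by positivity)
    _ = K₁ * K₂ * ε ^ N := by ring

lemma norm_sq_sum_orthonormal {m : ℕ} {f : Fin m → H} (hf : Orthonormal ℂ f) (c : Fin m → ℂ) :
    ‖∑ j, c j • f j‖^2 = ∑ j, ‖c j‖^2 := by
  have h := inner_self_eq_norm_sq (𝕜 := ℂ) (∑ j, c j • f j)
  rw [← h, sum_inner]
  simp only [inner_smul_left, hf.inner_right_fintype]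
  rw [map_sum]
  refine Finset.sum_congr rfl fun j _ => ?_
  rw [RCLike.conj_mul, ← RCLike.ofReal_pow, RCLike.ofReal_re]

/-- Explicit finite rank "projection-like" operator attached to a finite tuple. -/
def projF {m : ℕ} (f : Fin m → H) : H →L[ℂ] H :=
  ∑ j, (innerSL ℂ (f j)).smulRight (f j)

lemma projF_apply {m : ℕ} (f : Fin m → H) (x : H) :
    projF f x = ∑ j, (inner ℂ (f j) x : ℂ) • f j := by
  simp [projF, ContinuousLinearMap.sum_apply]

lemma projF_adjoint {m : ℕ} (f : Fin m → H) : adjoint (projF f) = projF f := by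
  symm
  rw [eq_adjoint_iff]
  intro x y
  rw [projF_apply, projF_apply, sum_inner, inner_sum]
  refine Finset.sum_congr rfl fun j _ => ?_
  rw [inner_smul_left, inner_smul_right, ← inner_conj_symm x (f j)]
  ring

lemma projF_norm_sq {m : ℕ} {f : Fin m → H} (hf : Orthonormal ℂ f) (x : H) :
    ‖projF f x‖^2 = ∑ j, ‖(inner ℂ (f j) x : ℂ)‖^2 := by
  rw [projF_apply, norm_sq_sum_orthonormal hf]

/-- Finite-rank approximation of a compact operator on a Hilbert space. -/
lemma approx_of_compact {A : H →L[ℂ] H} (hA : IsCompactOperator (⇑A)) {δ : ℝ} (hδ : 0 < δ) :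
    ∃ (m : ℕ) (f : Fin m → H), Orthonormal ℂ f ∧ ‖A - projF f ∘L A‖ ≤ δ := by
  have hA' : IsCompactOperator ⇑(A : H →ₗ[ℂ] H) := hA
  have hcpt : IsCompact (closure (⇑(A : H →ₗ[ℂ] H) '' Metric.closedBall 0 1)) :=
    hA'.isCompact_closure_image_closedBall 1
  have hTB : TotallyBounded (⇑A '' Metric.closedBall 0 1) := by
    have h1 := hcpt.totallyBounded.subset subset_closure
    simpa using h1
  obtain ⟨t, htfin, hcover⟩ := (Metric.totallyBounded_iff.mp hTB) δ hδ
  haveI hfd : FiniteDimensional ℂ (Submodule.span ℂ t) := FiniteDimensional.span_of_finite ℂ htfin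
  haveI : CompleteSpace (Submodule.span ℂ t) := FiniteDimensional.complete ℂ _
  set R := Submodule.span ℂ t with hR
  set b := stdOrthonormalBasis ℂ R with hb
  set m := Module.finrank ℂ R with hm
  set f : Fin m → H := fun j => ((b j : R) : H) with hf
  have horth : Orthonormal ℂ f := b.orthonormal.comp_linearIsometry R.subtypeₗᵢ
  have hQeq : ∀ x : H, projF f x = ((R.orthogonalProjectionOnto x : R) : H) := by
    intro x
    rw [projF_apply]
    have h2 := b.orthogonalProjectionOnto_apply_eq_sum x
    have h3 := congrArg (Submodule.subtype R) h2
    simp only [map_sum, _root_.map_smul, Submodule.subtype_apply] at h3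
    rw [hf]
    exact h3.symm
  have hpt : ∀ x : H, ‖x‖ ≤ 1 → ‖A x - projF f (A x)‖ ≤ δ := by
    intro x hx
    have hmem : A x ∈ ⇑A '' Metric.closedBall 0 1 :=
      ⟨x, by simpa [Metric.mem_closedBall] using hx, rfl⟩
    obtain ⟨y, hy, hxy⟩ := Set.mem_iUnion₂.mp (hcover hmem)
    have hyR : y ∈ R := Submodule.subset_span hy
    have hmin : ‖A x - (R.orthogonalProjectionOnto (A x) : H)‖ = ⨅ v : R, ‖A x - v‖ :=
      Submodule.starProjection_minimal (U := R) (A x)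
    have hbdd : BddBelow (Set.range fun v : R => ‖A x - (v : H)‖) := by
      refine ⟨0, ?_⟩
      rintro r ⟨v, rfl⟩
      positivity
    have h2 : ‖A x - projF f (A x)‖ ≤ ‖A x - y‖ := by
      rw [hQeq]
      have := ciInf_le hbdd (⟨y, hyR⟩ : R)
      rw [← hmin] at this
      exact this
    have h3 : ‖A x - y‖ ≤ δ := by
      rw [Metric.mem_ball, dist_eq_norm] at hxy
      exact hxy.le
    exact h2.trans h3
  refine ⟨m, f, horth, ?_⟩
  refine ContinuousLinearMap.opNorm_le_bound _ hδ.le fun x => ?_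
  by_cases hx : x = 0
  · simp [hx]
  · have hnx : (0:ℝ) < ‖x‖ := norm_pos_iff.mpr hx
    set u := (‖x‖⁻¹ : ℂ) • x with hu
    have hnu : ‖u‖ ≤ 1 := by
      rw [hu, norm_smul, norm_inv, Complex.norm_real, Real.norm_eq_abs, abs_of_pos hnx,
        inv_mul_cancel₀ hnx.ne']
    have h1 := hpt u hnu
    have h2 : (A - projF f ∘L A) x = (‖x‖ : ℂ) • (A u - projF f (A u)) := by
      rw [hu]
      simp only [ContinuousLinearMap.sub_apply, ContinuousLinearMap.comp_apply,
        _root_.map_smul, smul_sub, smul_smul]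
      rw [mul_inv_cancel₀ (by exact_mod_cast hnx.ne')]
      simp
    rw [h2, norm_smul, Complex.norm_real, Real.norm_eq_abs, abs_of_pos hnx]
    calc ‖x‖ * ‖A u - projF f (A u)‖ ≤ ‖x‖ * δ := mul_le_mul_of_nonneg_left h1 hnx.le
      _ = δ * ‖x‖ := by ring

lemma norm_adjoint_eq (A : H →L[ℂ] H) : ‖adjoint A‖ = ‖A‖ :=
  LinearIsometryEquiv.norm_map ContinuousLinearMap.adjoint A

lemma goodSmall_of_bounds {X : H →L[ℂ] H}
    (happrox : ∀ δ : ℝ, 0 < δ → ∃ B : ℝ, 0 ≤ B ∧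
      ∀ (N : ℕ) (e : Fin N → H), Orthonormal ℂ e →
        ∃ w : Fin N → ℝ, (∀ k, 0 ≤ w k) ∧ (∀ k, ‖X (e k)‖ ≤ w k + δ) ∧ ∑ k, (w k)^2 ≤ B) :
    GoodSmall X := by
  intro ε hε hε1
  have hδ : (0:ℝ) < Real.sqrt ε / 2 := by positivity
  set δ : ℝ := Real.sqrt ε / 2 with hδdef
  obtain ⟨B, hB0, hB⟩ := happrox δ hδ
  set c : ℝ := max 1 (‖X‖^2) with hc
  have hc1 : (1:ℝ) ≤ c := le_max_left _ _
  set Mn : ℕ := ⌈B / δ^2⌉₊ with hMn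
  have hεN : ∀ N : ℕ, (0:ℝ) < ε ^ N := fun N => pow_pos hε N
  refine ⟨c^Mn / ε^Mn, ?_, fun N e he => ?_⟩
  · rw [le_div_iff₀ (hεN Mn)]
    have h1 : ε^Mn ≤ 1 := pow_le_one₀ hε.le hε1
    have h2 : (1:ℝ) ≤ c^Mn := one_le_pow₀ hc1
    linarith
  · obtain ⟨w, hw0, hwb, hwsum⟩ := hB N e he
    classical
    set bigs := Finset.univ.filter (fun k => δ ≤ w k) with hbigs
    have hcard : (bigs.card : ℝ) * δ^2 ≤ B := by
      calc (bigs.card : ℝ) * δ^2 = ∑ _k ∈ bigs, δ^2 := by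
            rw [Finset.sum_const, nsmul_eq_mul]
        _ ≤ ∑ k ∈ bigs, (w k)^2 := by
            refine Finset.sum_le_sum fun k hk => ?_
            exact pow_le_pow_left₀ hδ.le (Finset.mem_filter.mp hk).2 2
        _ ≤ ∑ k, (w k)^2 := Finset.sum_le_sum_of_subset_of_nonneg (Finset.subset_univ _)
            (fun i _ _ => sq_nonneg _)
        _ ≤ B := hwsum
    have hcardM : bigs.card ≤ Mn := by
      have h1 : (bigs.card : ℝ) ≤ B / δ^2 := by
        rw [le_div_iff₀ (by positivity)]; exact hcard
      have h2 : (bigs.card : ℝ) ≤ (Mn : ℝ) := h1.trans (Nat.le_ceil _)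
      exact_mod_cast h2
    have hfac : ∀ k, ‖X (e k)‖^2 ≤ c := by
      intro k
      refine le_max_of_le_right ?_
      have h1 : ‖X (e k)‖ ≤ ‖X‖ := by
        have := X.le_opNorm (e k); rwa [he.1 k, mul_one] at this
      exact pow_le_pow_left₀ (norm_nonneg _) h1 2
    have hsmall : ∀ k ∈ bigsᶜ, ‖X (e k)‖^2 ≤ ε := by
      intro k hk
      have hwk : w k < δ := by
        by_contra hcon
        push_neg at hcon
        exact (Finset.mem_compl.mp hk) (Finset.mem_filter.mpr ⟨Finset.mem_univ _, hcon⟩)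
      have h1 : ‖X (e k)‖ ≤ 2*δ := (hwb k).trans (by linarith)
      calc ‖X (e k)‖^2 ≤ (2*δ)^2 := pow_le_pow_left₀ (norm_nonneg _) h1 2
        _ = Real.sqrt ε ^ 2 := by rw [hδdef]; ring
        _ = ε := Real.sq_sqrt hε.le
    have hεsplit : ε ^ (N - Mn) ≤ ε ^ N / ε ^ Mn := by
      rcases le_or_gt Mn N with h | h
      · rw [le_div_iff₀ (hεN Mn), ← pow_add, Nat.sub_add_cancel h]
      · rw [Nat.sub_eq_zero_of_le h.le, pow_zero, le_div_iff₀ (hεN Mn), one_mul]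
        exact pow_le_pow_of_le_one hε.le hε1 h.le
    calc G (fun i => X (e i)) ≤ ∏ i, ‖X (e i)‖^2 := G_le_prod _
      _ = (∏ i ∈ bigs, ‖X (e i)‖^2) * ∏ i ∈ bigsᶜ, ‖X (e i)‖^2 :=
          (Finset.prod_mul_prod_compl bigs _).symm
      _ ≤ c^Mn * ε^(N - Mn) := by
          have hp1 : (∏ i ∈ bigs, ‖X (e i)‖^2) ≤ c^Mn := by
            calc ∏ i ∈ bigs, ‖X (e i)‖^2 ≤ ∏ _i ∈ bigs, c :=
                  Finset.prod_le_prod (fun i _ => sq_nonneg _) (fun i _ => hfac i)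
              _ = c^bigs.card := Finset.prod_const c
              _ ≤ c^Mn := pow_le_pow_right₀ hc1 hcardM
          have hp2 : (∏ i ∈ bigsᶜ, ‖X (e i)‖^2) ≤ ε^(N - Mn) := by
            calc ∏ i ∈ bigsᶜ, ‖X (e i)‖^2 ≤ ∏ _i ∈ bigsᶜ, ε :=
                  Finset.prod_le_prod (fun i _ => sq_nonneg _) hsmall
              _ = ε^(bigsᶜ.card) := Finset.prod_const ε
              _ ≤ ε^(N - Mn) := by
                  apply pow_le_pow_of_le_one hε.le hε1
                  rw [Finset.card_compl, Fintype.card_fin]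
                  exact Nat.sub_le_sub_left hcardM N
          exact mul_le_mul hp1 hp2 (Finset.prod_nonneg fun i _ => sq_nonneg _)
            (pow_nonneg (by linarith) Mn)
      _ ≤ c^Mn * (ε^N / ε^Mn) := mul_le_mul_of_nonneg_left hεsplit (by positivity)
      _ = c^Mn / ε^Mn * ε^N := by ring

lemma goodSmall_of_compact {A : H →L[ℂ] H} (hA : IsCompactOperator (⇑A)) : GoodSmall A := by
  apply goodSmall_of_bounds
  intro δ hδ
  obtain ⟨m, f, horth, hop⟩ := approx_of_compact hA hδ
  refine ⟨m * ‖A‖^2, by positivity, fun N e he => ?_⟩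
  refine ⟨fun k => ‖projF f (A (e k))‖, fun k => norm_nonneg _, fun k => ?_, ?_⟩
  · have h3 : ‖(A - projF f ∘L A) (e k)‖ ≤ δ := by
      calc ‖(A - projF f ∘L A) (e k)‖ ≤ ‖A - projF f ∘L A‖ * ‖e k‖ := le_opNorm _ _
        _ ≤ δ := by rw [he.1 k, mul_one]; exact hop
    have h1 : ‖A (e k) - projF f (A (e k))‖ ≤ δ := by simpa using h3
    calc ‖A (e k)‖
        ≤ ‖projF f (A (e k))‖ + ‖projF f (A (e k)) - A (e k)‖ :=
          norm_le_norm_add_norm_sub _ _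
      _ ≤ ‖projF f (A (e k))‖ + δ := by rw [norm_sub_rev]; linarith
  · calc ∑ k, ‖projF f (A (e k))‖^2
        = ∑ k, ∑ j, ‖(inner ℂ (f j) (A (e k)) : ℂ)‖^2 :=
          Finset.sum_congr rfl fun k _ => projF_norm_sq horth _
      _ = ∑ j, ∑ k, ‖(inner ℂ (f j) (A (e k)) : ℂ)‖^2 := Finset.sum_comm
      _ ≤ ∑ _j : Fin m, ‖A‖^2 := by
          refine Finset.sum_le_sum fun j _ => ?_
          have hb : ∑ k, ‖(inner ℂ (e k) (adjoint A (f j)) : ℂ)‖^2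
              ≤ ‖adjoint A (f j)‖^2 := he.sum_inner_products_le _
          have heq : ∀ k, ‖(inner ℂ (f j) (A (e k)) : ℂ)‖
              = ‖(inner ℂ (e k) (adjoint A (f j)) : ℂ)‖ := by
            intro k
            rw [← ContinuousLinearMap.adjoint_inner_left, norm_inner_symm]
          calc ∑ k, ‖(inner ℂ (f j) (A (e k)) : ℂ)‖^2
              = ∑ k, ‖(inner ℂ (e k) (adjoint A (f j)) : ℂ)‖^2 :=
                Finset.sum_congr rfl fun k _ => by rw [heq k]
            _ ≤ ‖adjoint A (f j)‖^2 := hb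
            _ ≤ ‖A‖^2 := by
                have h1 : ‖adjoint A (f j)‖ ≤ ‖A‖ := by
                  have h2 := (adjoint A).le_opNorm (f j)
                  rwa [horth.1 j, mul_one, norm_adjoint_eq] at h2
                exact pow_le_pow_left₀ (norm_nonneg _) h1 2
      _ = m * ‖A‖^2 := by rw [Finset.sum_const, Finset.card_univ, Fintype.card_fin,
            nsmul_eq_mul]

lemma goodSmall_of_adjoint_compact {A : H →L[ℂ] H} (hA : IsCompactOperator (⇑A)) :
    GoodSmall (adjoint A) := by
  apply goodSmall_of_bounds
  intro δ hδ
  obtain ⟨m, f, horth, hop⟩ := approx_of_compact hA hδ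
  have hopadj : ‖adjoint A - adjoint A ∘L projF f‖ ≤ δ := by
    have h1 : adjoint A - adjoint A ∘L projF f = adjoint (A - projF f ∘L A) := by
      rw [map_sub]
      rw [ContinuousLinearMap.adjoint_comp, projF_adjoint]
    rw [h1, norm_adjoint_eq]
    exact hop
  refine ⟨m * ‖adjoint A‖^2, by positivity, fun N e he => ?_⟩
  refine ⟨fun k => ‖adjoint A‖ * ‖projF f (e k)‖, fun k => by positivity, fun k => ?_, ?_⟩
  · have h3 : ‖(adjoint A - adjoint A ∘L projF f) (e k)‖ ≤ δ := by
      calc ‖(adjoint A - adjoint A ∘L projF f) (e k)‖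
          ≤ ‖adjoint A - adjoint A ∘L projF f‖ * ‖e k‖ := le_opNorm _ _
        _ ≤ δ := by rw [he.1 k, mul_one]; exact hopadj
    have h1 : ‖adjoint A (e k) - adjoint A (projF f (e k))‖ ≤ δ := by simpa using h3
    have h4 : ‖adjoint A (projF f (e k))‖ ≤ ‖adjoint A‖ * ‖projF f (e k)‖ := le_opNorm _ _
    calc ‖adjoint A (e k)‖
        ≤ ‖adjoint A (projF f (e k))‖
            + ‖adjoint A (projF f (e k)) - adjoint A (e k)‖ :=
          norm_le_norm_add_norm_sub _ _
      _ ≤ ‖adjoint A‖ * ‖projF f (e k)‖ + δ := by rw [norm_sub_rev]; linarith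
  · calc ∑ k, (‖adjoint A‖ * ‖projF f (e k)‖)^2
        = ‖adjoint A‖^2 * ∑ k, ‖projF f (e k)‖^2 := by
          rw [Finset.mul_sum]
          exact Finset.sum_congr rfl fun k _ => by ring
      _ ≤ ‖adjoint A‖^2 * m := by
          have hsum : ∑ k, ‖projF f (e k)‖^2 ≤ (m:ℝ) := by
            calc ∑ k, ‖projF f (e k)‖^2
                = ∑ k, ∑ j, ‖(inner ℂ (f j) (e k) : ℂ)‖^2 :=
                  Finset.sum_congr rfl fun k _ => projF_norm_sq horth _
              _ = ∑ j, ∑ k, ‖(inner ℂ (f j) (e k) : ℂ)‖^2 := Finset.sum_comm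
              _ ≤ ∑ _j : Fin m, (1:ℝ) := by
                  refine Finset.sum_le_sum fun j _ => ?_
                  have hb : ∑ k, ‖(inner ℂ (e k) (f j) : ℂ)‖^2 ≤ ‖f j‖^2 :=
                    he.sum_inner_products_le _
                  calc ∑ k, ‖(inner ℂ (f j) (e k) : ℂ)‖^2
                      = ∑ k, ‖(inner ℂ (e k) (f j) : ℂ)‖^2 :=
                        Finset.sum_congr rfl fun k _ => by rw [norm_inner_symm]
                    _ ≤ ‖f j‖^2 := hb
                    _ = 1 := by rw [horth.1 j]; norm_num
              _ = (m:ℝ) := by rw [Finset.sum_const, Finset.card_univ, Fintype.card_fin,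
                    nsmul_eq_mul, mul_one]
          exact mul_le_mul_of_nonneg_left hsum (by positivity)
      _ = m * ‖adjoint A‖^2 := by ring

lemma exists_indep_tuple {T : H →L[ℂ] H}
    (hrank : ¬ FiniteDimensional ℂ (LinearMap.range (T : H →ₗ[ℂ] H))) (N : ℕ) :
    ∃ x : Fin N → H, LinearIndependent ℂ (fun i => T (x i)) := by
  induction N with
  | zero => exact ⟨fun _ => 0, linearIndependent_empty_type⟩
  | succ N ih =>
      obtain ⟨x, hx⟩ := ih
      set W := Submodule.span ℂ (Set.range fun i => T (x i)) with hW
      haveI : FiniteDimensional ℂ W := FiniteDimensional.span_of_finite ℂ (Set.finite_range _)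
      have hnotsub : ¬ (LinearMap.range (T : H →ₗ[ℂ] H) ≤ W) := by
        intro hle
        exact hrank (Submodule.finiteDimensional_of_le hle)
      obtain ⟨y, hy, hyW⟩ : ∃ y, y ∈ LinearMap.range (T : H →ₗ[ℂ] H) ∧ y ∉ W := by
        by_contra hcon
        push_neg at hcon
        exact hnotsub fun y hy => hcon y hy
      obtain ⟨z, rfl⟩ := hy
      refine ⟨Fin.cons z x, ?_⟩
      have hcomp : (fun i => T ((Fin.cons z x : Fin (N+1) → H) i))
          = Fin.cons (T z) (fun i => T (x i)) := by
        funext i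
        refine Fin.cases ?_ ?_ i <;> simp
      rw [hcomp, linearIndependent_fin_cons]
      exact ⟨hx, hyW⟩

lemma main_contradiction {T C D : H →L[ℂ] H} (heq : T = C * (T * D))
    (hC : GoodSmall C) (hD : GoodSmall D)
    (hrank : ¬ FiniteDimensional ℂ (LinearMap.range (T : H →ₗ[ℂ] H))) : False := by
  obtain ⟨K₁, hK₁, h₁⟩ := hC (1/2) (by norm_num) (by norm_num)
  obtain ⟨K₂, hK₂, h₂⟩ := hD (1/2) (by norm_num) (by norm_num)
  have hK12 : (0:ℝ) < K₁ * K₂ := by nlinarith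
  obtain ⟨N, hN4⟩ : ∃ N : ℕ, ((1:ℝ)/4)^N < (K₁ * K₂)⁻¹ :=
    exists_pow_lt_of_lt_one (by positivity) (by norm_num)
  have hN : K₁ * K₂ * ((1:ℝ)/4)^N < 1 := by
    have h1 := mul_lt_mul_of_pos_left hN4 hK12
    rwa [mul_inv_cancel₀ hK12.ne'] at h1
  set s : ℝ := K₁ * (1/2)^N with hs
  set t : ℝ := K₂ * (1/2)^N with ht
  have hs0 : (0:ℝ) ≤ s := by positivity
  have ht0 : (0:ℝ) ≤ t := by positivity
  have hst : s * t < 1 := by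
    have h1 : s * t = K₁ * K₂ * ((1:ℝ)/4)^N := by
      rw [hs, ht]
      have h2 : ((1:ℝ)/2)^N * ((1:ℝ)/2)^N = ((1:ℝ)/4)^N := by
        rw [← mul_pow]; norm_num
      calc K₁ * (1/2:ℝ)^N * (K₂ * (1/2)^N) = K₁ * K₂ * ((1/2:ℝ)^N * (1/2)^N) := by ring
        _ = K₁ * K₂ * ((1:ℝ)/4)^N := by rw [h2]
    rw [h1]; exact hN
  obtain ⟨x, hx⟩ := exists_indep_tuple hrank N
  have hg : 0 < G (fun i => T (x i)) := G_pos_of_linearIndependent hx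
  set cT : ℝ := (max 1 (‖T‖^2))^N with hcT
  have hcT1 : (1:ℝ) ≤ cT := one_le_pow₀ (le_max_left _ _)
  have hTbd : GramBound T N cT := gramBound_trivial T N
  have hiter : ∀ n : ℕ, T = C^n * (T * D^n) := by
    intro n
    induction n with
    | zero => simp
    | succ n ih =>
        calc T = C^n * (T * D^n) := ih
          _ = C^n * ((C * (T * D)) * D^n) := by rw [← heq]
          _ = C^(n+1) * (T * D^(n+1)) := by rw [pow_succ, pow_succ']; noncomm_ring
  have hchain : ∀ n : ℕ, G (fun i => T (x i)) ≤ s^n * (cT * (t^n * G x)) := by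
    intro n
    have hfun : (fun i => T (x i)) = fun i => (C^n) ((T * D^n) (x i)) := by
      funext i
      conv_lhs => rw [hiter n]
      rfl
    have hCb : GramBound (C^n) N (s^n) := gramBound_pow hs0 (h₁ N) n
    have hDb : GramBound (D^n) N (t^n) := gramBound_pow ht0 (h₂ N) n
    calc G (fun i => T (x i)) = G (fun i => (C^n) ((T * D^n) (x i))) := by rw [hfun]
      _ ≤ s^n * G (fun i => (T * D^n) (x i)) :=
          master (pow_nonneg hs0 n) hCb _
      _ = s^n * G (fun i => T ((D^n) (x i))) := rfl
      _ ≤ s^n * (cT * G (fun i => (D^n) (x i))) := by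
          apply mul_le_mul_of_nonneg_left _ (pow_nonneg hs0 n)
          exact master (by positivity) hTbd _
      _ ≤ s^n * (cT * (t^n * G x)) := by
          apply mul_le_mul_of_nonneg_left _ (pow_nonneg hs0 n)
          apply mul_le_mul_of_nonneg_left _ (by positivity)
          exact master (pow_nonneg ht0 n) hDb x
  by_cases hGx : G x = 0
  · have h0 := hchain 0
    rw [pow_zero, pow_zero, hGx] at h0
    simp at h0
    linarith
  · have hGx0 : 0 < G x := lt_of_le_of_ne (G_nonneg x) (Ne.symm hGx)
    have hcGx : (0:ℝ) < cT * G x := by positivity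
    obtain ⟨n, hn⟩ : ∃ n : ℕ, (s*t)^n < G (fun i => T (x i)) / (cT * G x) :=
      exists_pow_lt_of_lt_one (by positivity) hst
    have h2 : (s*t)^n * (cT * G x) < G (fun i => T (x i)) := by
      have h3 := mul_lt_mul_of_pos_right hn hcGx
      rwa [div_mul_cancel₀ _ hcGx.ne'] at h3
    have h4 := hchain n
    have h5 : s^n * (cT * (t^n * G x)) = (s*t)^n * (cT * G x) := by
      rw [mul_pow]; ring
    linarith

end SIAux

end SIAux

variable {H : Type*} [NormedAddCommGroup H] [InnerProductSpace ℂ H] [CompleteSpace H]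

/-- A multiplicative semigroup of operators: a set closed under composition. -/
def IsMulSemigroup {M : Type*} [Mul M] (S : Set M) : Prop :=
  ∀ A ∈ S, ∀ B ∈ S, A * B ∈ S

/-- `J` is a (two-sided) semigroup-ideal of `S`. -/
def IsSemigroupIdeal {M : Type*} [Mul M] (S J : Set M) : Prop :=
  J ⊆ S ∧ ∀ T ∈ J, ∀ X ∈ S, X * T ∈ J ∧ T * X ∈ J

/-- `S` is a selfadjoint-ideal (SI) semigroup: every semigroup-ideal of `S`
is closed under adjoints. -/
def IsSI (S : Set (H →L[ℂ] H)) : Prop :=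
  ∀ J : Set (H →L[ℂ] H), IsSemigroupIdeal S J → ∀ T ∈ J, adjoint T ∈ J

open SIAux in
/-- a semigroup of compact operators containing a nonselfadjoint
operator of infinite rank is not SI. -/
theorem stmt2 (S : Set (H →L[ℂ] H)) (hS : IsMulSemigroup S)
    (hcpt : ∀ A ∈ S, IsCompactOperator (⇑A))
    (T : H →L[ℂ] H) (hT : T ∈ S) (hTsa : T ≠ adjoint T)
    (hrank : ¬ FiniteDimensional ℂ (LinearMap.range (T : H →ₗ[ℂ] H))) :
    ¬ IsSI S := by
  intro hSI
  classical
  set J : Set (H →L[ℂ] H) :=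
    {W | W = T ∨ (∃ A ∈ S, W = A * T) ∨ (∃ B ∈ S, W = T * B) ∨
         (∃ A ∈ S, ∃ B ∈ S, W = A * (T * B))} with hJ
  have hJsub : J ⊆ S := by
    intro W hW
    rcases hW with rfl | ⟨A, hA, rfl⟩ | ⟨B, hB, rfl⟩ | ⟨A, hA, B, hB, rfl⟩
    · exact hT
    · exact hS A hA T hT
    · exact hS T hT B hB
    · exact hS A hA _ (hS T hT B hB)
  have hJideal : IsSemigroupIdeal S J := by
    refine ⟨hJsub, ?_⟩
    intro W hW X hX
    rcases hW with rfl | ⟨A, hA, rfl⟩ | ⟨B, hB, rfl⟩ | ⟨A, hA, B, hB, rfl⟩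
    · exact ⟨Or.inr (Or.inl ⟨X, hX, rfl⟩), Or.inr (Or.inr (Or.inl ⟨X, hX, rfl⟩))⟩
    · constructor
      · exact Or.inr (Or.inl ⟨X * A, hS X hX A hA, by rw [mul_assoc]⟩)
      · exact Or.inr (Or.inr (Or.inr ⟨A, hA, X, hX, by rw [mul_assoc]⟩))
    · constructor
      · exact Or.inr (Or.inr (Or.inr ⟨X, hX, B, hB, rfl⟩))
      · exact Or.inr (Or.inr (Or.inl ⟨B * X, hS B hB X hX, by rw [mul_assoc]⟩))
    · constructor
      · exact Or.inr (Or.inr (Or.inr ⟨X * A, hS X hX A hA, B, hB, by noncomm_ring⟩))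
      · exact Or.inr (Or.inr (Or.inr ⟨A, hA, B * X, hS B hB X hX, by noncomm_ring⟩))
  have hadj := hSI J hJideal T (Or.inl rfl)
  have hstar : star T = T ∨ (∃ A ∈ S, star T = A * T) ∨ (∃ B ∈ S, star T = T * B) ∨
      (∃ A ∈ S, ∃ B ∈ S, star T = A * (T * B)) := by
    rw [ContinuousLinearMap.star_eq_adjoint]
    exact hadj
  rcases hstar with h | ⟨A, hA, h⟩ | ⟨B, hB, h⟩ | ⟨A, hA, B, hB, h⟩
  · exact hTsa (by rw [← ContinuousLinearMap.star_eq_adjoint, h])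
  · have heq : T = A * (T * star A) := by
      conv_lhs => rw [← star_star T, h, star_mul, h]
      rw [mul_assoc]
    have hDA : GoodSmall (star A) := by
      rw [ContinuousLinearMap.star_eq_adjoint]
      exact goodSmall_of_adjoint_compact (hcpt A hA)
    exact main_contradiction heq (goodSmall_of_compact (hcpt A hA)) hDA hrank
  · have heq : T = star B * (T * B) := by
      conv_lhs => rw [← star_star T, h, star_mul, h]
    have hCB : GoodSmall (star B) := by
      rw [ContinuousLinearMap.star_eq_adjoint]
      exact goodSmall_of_adjoint_compact (hcpt B hB)
    exact main_contradiction heq hCB (goodSmall_of_compact (hcpt B hB)) hrank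
  · have heq : T = (star B * A) * (T * (B * star A)) := by
      conv_lhs => rw [← star_star T, h, star_mul, star_mul, h]
      noncomm_ring
    have hSB : GoodSmall (star B) := by
      rw [ContinuousLinearMap.star_eq_adjoint]
      exact goodSmall_of_adjoint_compact (hcpt B hB)
    have hSA : GoodSmall (star A) := by
      rw [ContinuousLinearMap.star_eq_adjoint]
      exact goodSmall_of_adjoint_compact (hcpt A hA)
    exact main_contradiction heq (goodSmall_mul hSB (goodSmall_of_compact (hcpt A hA)))
      (goodSmall_mul (goodSmall_of_compact (hcpt B hB)) hSA) hrank
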